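/- Let J ⊊ b' be an ideal of the Borel subalgebra b contained in the derived algebra, with root set R_J (so J = ⊕_{α∈R_J} g_α). Then the image of C·X_α in b/J generates a 1-dimensional ideal of b/J contained in b'/J if and only if α ∈ R⁺ \ R_J and for every simple root a, either a + α is not a root or a + α ∈ R_J. -/

import Mathlib

set_option linter.unusedSectionVars false

namespace S5

variable {b : Type*} [LieRing b] [LieAlgebra ℂ b]
variable {ι : Type*} {V : Type*} [AddCommGroup V] [Module ℂ V]

def VC (α : ι → V) : ι → List ι → ι → Prop
  | m, [], m' => m = m'
  | m, s :: l, m' => ∃ m₁, α m = α s + α m₁ ∧ VC α m₁ l m'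

theorem ad_nilpotent [Fintype ι] (H : LieSubalgebra ℂ b) (α : ι → (H →ₗ[ℂ] ℂ)) (X : ι → b)
    (hαne : ∀ i, α i ≠ 0)
    (hroot : ∀ (h : H) (i : ι), ⁅(h : b), X i⁆ = α i h • X i)
    (hSpan : ∀ x : b, ∃ (h : H) (c : ι → ℂ), x = (h : b) + ∑ i, c i • X i)
    (hXX : ∀ i j k : ι, α k = α i + α j → ∃ c : ℂ, c ≠ 0 ∧ ⁅X i, X j⁆ = c • X k)
    (hXX0 : ∀ i j : ι, (¬∃ k, α k = α i + α j) → ⁅X i, X j⁆ = 0)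
    (s : ι) : IsNilpotent (LieAlgebra.ad ℂ b (X s)) := by
  set A := LieAlgebra.ad ℂ b (X s) with hA
  have hAapp : ∀ v : b, A v = ⁅X s, v⁆ := fun v => rfl
  -- weight tracking
  have A1 : ∀ (n : ℕ) (k : ι), (A ^ n) (X k) = 0 ∨
      ∃ (m : ι) (c : ℂ), (A ^ n) (X k) = c • X m ∧ α m = α k + n • α s := by
    intro n
    induction n with
    | zero =>
      intro k; right; exact ⟨k, 1, by simp, by simp⟩
    | succ n ih =>
      intro k
      have hsplit : (A ^ (n + 1)) (X k) = A ((A ^ n) (X k)) := by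
        rw [pow_succ', Module.End.mul_apply]
      rcases ih k with h0 | ⟨m, c, he, hw⟩
      · left; rw [hsplit, h0, map_zero]
      · by_cases hex : ∃ u, α u = α s + α m
        · obtain ⟨u, hu⟩ := hex
          obtain ⟨c', hc', hb⟩ := hXX s m u hu
          right
          refine ⟨u, c * c', ?_, ?_⟩
          · rw [hsplit, he, map_smul, hAapp, hb, smul_smul]
          · rw [hu, hw, succ_nsmul]; abel
        · left
          rw [hsplit, he, map_smul, hAapp, hXX0 s m hex, smul_zero]
  have A2 : ∀ k, (A ^ (Fintype.card ι + 1)) (X k) = 0 := by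
    intro k
    by_contra hne
    have key : ∀ n : ℕ, n ≤ Fintype.card ι + 1 → (A ^ n) (X k) ≠ 0 := by
      intro n hn h0
      apply hne
      have : A ^ (Fintype.card ι + 1) = A ^ (Fintype.card ι + 1 - n) * A ^ n := by
        rw [← pow_add]; congr 1; omega
      rw [this, Module.End.mul_apply, h0, map_zero]
    have pick : ∀ n : Fin (Fintype.card ι + 1), ∃ m, α m = α k + (n : ℕ) • α s := by
      intro n
      rcases A1 n k with h0 | ⟨m, c, _, hw⟩
      · exact absurd h0 (key n (by omega))
      · exact ⟨m, hw⟩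
    choose g hg using pick
    have ginj : Function.Injective g := by
      intro n₁ n₂ he
      have h1 : α k + (n₁ : ℕ) • α s = α k + (n₂ : ℕ) • α s := by
        rw [← hg n₁, ← hg n₂, he]
      have h2 : (n₁ : ℕ) • α s = (n₂ : ℕ) • α s := by
        exact add_left_cancel h1
      have h3 : (((n₁ : ℕ) : ℂ) - ((n₂ : ℕ) : ℂ)) • α s = 0 := by
        rw [sub_smul, Nat.cast_smul_eq_nsmul, Nat.cast_smul_eq_nsmul, h2, sub_self]
      rcases smul_eq_zero.mp h3 with h | h
      · have : ((n₁ : ℕ) : ℂ) = ((n₂ : ℕ) : ℂ) := by linear_combination h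
        have : (n₁ : ℕ) = (n₂ : ℕ) := Nat.cast_injective this
        exact Fin.ext this
      · exact absurd h (hαne s)
    have := Fintype.card_le_of_injective g ginj
    simp at this
  refine ⟨Fintype.card ι + 2, ?_⟩
  apply LinearMap.ext
  intro x
  obtain ⟨h, c, rfl⟩ := hSpan x
  rw [LinearMap.zero_apply, map_add, map_sum]
  have hX0 : ∀ j, (A ^ (Fintype.card ι + 2)) (c j • X j) = 0 := by
    intro j
    rw [map_smul]
    have : (A ^ (Fintype.card ι + 2)) (X j) = A ((A ^ (Fintype.card ι + 1)) (X j)) := by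
      rw [pow_succ', Module.End.mul_apply]
    rw [this, A2, map_zero, smul_zero]
  have hH0 : (A ^ (Fintype.card ι + 2)) ((h : b)) = 0 := by
    have hsplit : (A ^ (Fintype.card ι + 2)) ((h : b)) = (A ^ (Fintype.card ι + 1)) (A (h : b)) := by
      rw [pow_succ, Module.End.mul_apply]
    have hAh : A (h : b) = (-(α s h)) • X s := by
      rw [hAapp, ← lie_skew, hroot h s, neg_smul]
    rw [hsplit, hAh, map_smul, A2, smul_zero]
  rw [hH0, zero_add]
  exact Finset.sum_eq_zero fun j _ => hX0 j


theorem vc_swap (α : ι → V) (X : ι → b)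
    (hXne : ∀ i, X i ≠ 0)
    (hXX : ∀ i j k : ι, α k = α i + α j → ∃ c : ℂ, c ≠ 0 ∧ ⁅X i, X j⁆ = c • X k)
    (hXX0 : ∀ i j : ι, (¬∃ k, α k = α i + α j) → ⁅X i, X j⁆ = 0)
    {s t m m₁ m₂ : ι} (hst : ¬∃ u, α u = α s + α t)
    (h1 : α m = α s + α m₁) (h2 : α m₁ = α t + α m₂) :
    ∃ m₁', α m = α t + α m₁' ∧ α m₁' = α s + α m₂ := by
  obtain ⟨c₁, hc₁, hb₁⟩ := hXX t m₂ m₁ h2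
  obtain ⟨c₂, hc₂, hb₂⟩ := hXX s m₁ m h1
  have hkey : ⁅X t, ⁅X s, X m₂⁆⁆ = (c₁ * c₂) • X m := by
    have h0 : ⁅X s, X t⁆ = 0 := hXX0 s t hst
    have := leibniz_lie (X s) (X t) (X m₂)
    rw [h0, zero_lie, zero_add] at this
    rw [← this, hb₁, lie_smul, hb₂, smul_smul]
  have hne : ⁅X s, X m₂⁆ ≠ 0 := by
    intro h
    rw [h, lie_zero] at hkey
    exact hXne m (by
      have := hkey.symm
      rcases smul_eq_zero.mp this with h' | h'
      · exact absurd h' (mul_ne_zero hc₁ hc₂)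
      · exact h')
  have hex : ∃ u, α u = α s + α m₂ := by
    by_contra hno
    exact hne (hXX0 s m₂ hno)
  obtain ⟨u, hu⟩ := hex
  refine ⟨u, ?_, hu⟩
  rw [h1, h2, hu]
  abel

theorem vc_bubble (α : ι → V) (X : ι → b)
    (hXne : ∀ i, X i ≠ 0)
    (hXX : ∀ i j k : ι, α k = α i + α j → ∃ c : ℂ, c ≠ 0 ∧ ⁅X i, X j⁆ = c • X k)
    (hXX0 : ∀ i j : ι, (¬∃ k, α k = α i + α j) → ⁅X i, X j⁆ = 0) :
    ∀ (l : List ι) {s m m' : ι}, VC α m (s :: l) m' →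
      ∀ t ∈ l, (∃ u, α u = α s + α t) →
      ∃ l' : List ι, l'.length = l.length ∧ VC α m l' m' := by
  intro l
  induction l with
  | nil => intro s m m' _ t ht; exact absurd ht List.not_mem_nil
  | cons t₀ rest ih =>
    intro s m m' hvc t ht hrt
    obtain ⟨m₁, h1, m₂, h2, h3⟩ := hvc
    by_cases hu : ∃ u, α u = α s + α t₀
    · obtain ⟨u, hu⟩ := hu
      refine ⟨u :: rest, by simp, ⟨m₂, ?_, h3⟩⟩
      rw [h1, h2, hu]; abel
    · have ht' : t ∈ rest := by
        rcases List.mem_cons.mp ht with h | h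
        · subst h; exact absurd hrt hu
        · exact h
      obtain ⟨m₁', hA, hB⟩ := vc_swap α X hXne hXX hXX0 hu h1 h2
      obtain ⟨l₂, hlen, hvc₂⟩ := ih ⟨m₂, hB, h3⟩ t ht' hrt
      exact ⟨t₀ :: l₂, by simp [hlen], ⟨m₁', hA, hvc₂⟩⟩


theorem vc_scalar (α : ι → V) (X : ι → b)
    (hXX : ∀ i j k : ι, α k = α i + α j → ∃ c : ℂ, c ≠ 0 ∧ ⁅X i, X j⁆ = c • X k) :
    ∀ (l : List ι) {m m' : ι}, VC α m l m' →
      ∃ c : ℂ, c ≠ 0 ∧ ((l.map fun u => LieAlgebra.ad ℂ b (X u)).prod) (X m') = c • X m := by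
  intro l
  induction l with
  | nil =>
    intro m m' h
    cases h
    exact ⟨1, one_ne_zero, by simp⟩
  | cons s rest ih =>
    intro m m' h
    obtain ⟨m₁, h1, h2⟩ := h
    obtain ⟨c₀, hc₀, he⟩ := ih h2
    obtain ⟨c, hc, hb⟩ := hXX s m₁ m h1
    refine ⟨c₀ * c, mul_ne_zero hc₀ hc, ?_⟩
    rw [List.map_cons, List.prod_cons, Module.End.mul_apply, he, map_smul,
      LieAlgebra.ad_apply, hb, smul_smul]

theorem no_cycle [Fintype ι] (H : LieSubalgebra ℂ b) (α : ι → (H →ₗ[ℂ] ℂ)) (X : ι → b)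
    (hXne : ∀ i, X i ≠ 0)
    (hαne : ∀ i, α i ≠ 0)
    (hroot : ∀ (h : H) (i : ι), ⁅(h : b), X i⁆ = α i h • X i)
    (hSpan : ∀ x : b, ∃ (h : H) (c : ι → ℂ), x = (h : b) + ∑ i, c i • X i)
    (hXX : ∀ i j k : ι, α k = α i + α j → ∃ c : ℂ, c ≠ 0 ∧ ⁅X i, X j⁆ = c • X k)
    (hXX0 : ∀ i j : ι, (¬∃ k, α k = α i + α j) → ⁅X i, X j⁆ = 0) :
    ∀ (l : List ι) (m : ι), l ≠ [] → VC α m l m → False := by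
  suffices h : ∀ (n : ℕ) (l : List ι) (m : ι), l.length ≤ n → l ≠ [] → VC α m l m → False by
    intro l m h1 h2; exact h l.length l m le_rfl h1 h2
  intro n
  induction n with
  | zero =>
    intro l m hlen hne _
    cases l with
    | nil => exact hne rfl
    | cons a l => simp at hlen
  | succ n ih =>
    intro l m hlen hne hvc
    cases l with
    | nil => exact hne rfl
    | cons s ltail =>
      by_cases hpair : ∃ t ∈ ltail, ∃ u, α u = α s + α t
      · obtain ⟨t, ht, hrt⟩ := hpair
        obtain ⟨l', hlen', hvc'⟩ := vc_bubble α X hXne hXX hXX0 ltail hvc t ht hrt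
        have hne' : l' ≠ [] := by
          intro h0
          rw [h0] at hlen'
          have h00 : ltail.length = 0 := by simpa using hlen'.symm
          rw [List.eq_nil_of_length_eq_zero h00] at ht
          exact List.not_mem_nil ht
        apply ih l' m _ hne' hvc'
        rw [hlen']
        have := hlen
        simp only [List.length_cons] at this
        omega
      · push_neg at hpair
        -- all brackets with the head vanish
        have hcomm : ∀ B ∈ ltail.map fun u => LieAlgebra.ad ℂ b (X u),
            Commute (LieAlgebra.ad ℂ b (X s)) B := by
          intro B hB
          obtain ⟨t, ht, rfl⟩ := List.mem_map.mp hB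
          have h0 : ⁅X s, X t⁆ = 0 := hXX0 s t (by
            intro ⟨u, hu⟩; exact hpair t ht u hu)
          have hlie : ⁅LieAlgebra.ad ℂ b (X s), LieAlgebra.ad ℂ b (X t)⁆ = 0 := by
            ext v
            rw [Ring.lie_def, LinearMap.sub_apply, Module.End.mul_apply, Module.End.mul_apply,
              LieAlgebra.ad_apply, LieAlgebra.ad_apply, LieAlgebra.ad_apply, LieAlgebra.ad_apply,
              ← lie_lie, h0, zero_lie, LinearMap.zero_apply]
          rw [Ring.lie_def] at hlie
          have h2 := sub_eq_zero.mp hlie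
          unfold Commute SemiconjBy
          exact h2
        have hnilA : IsNilpotent (LieAlgebra.ad ℂ b (X s)) :=
          ad_nilpotent H α X hαne hroot hSpan hXX hXX0 s
        have hcommute : Commute (LieAlgebra.ad ℂ b (X s))
            ((ltail.map fun u => LieAlgebra.ad ℂ b (X u)).prod) :=
          Commute.list_prod_right _ _ hcomm
        have hnilE : IsNilpotent (((s :: ltail).map fun u => LieAlgebra.ad ℂ b (X u)).prod) := by
          rw [List.map_cons, List.prod_cons]
          exact hcommute.isNilpotent_mul_right hnilA
        obtain ⟨c, hc, he⟩ := vc_scalar α X hXX (s :: ltail) hvc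
        set E := (((s :: ltail).map fun u => LieAlgebra.ad ℂ b (X u)).prod) with hE
        have hiter : ∀ N : ℕ, (E ^ N) (X m) = c ^ N • X m := by
          intro N
          induction N with
          | zero => simp
          | succ N ihN =>
            rw [pow_succ, Module.End.mul_apply, he, map_smul, ihN, smul_smul,
              pow_succ, mul_comm]
        obtain ⟨N, hN⟩ := hnilE
        have := hiter N
        rw [hN, LinearMap.zero_apply] at this
        exact hXne m (by
          have := this.symm
          rcases smul_eq_zero.mp this with h | h
          · exact absurd h (pow_ne_zero N hc)
          · exact h)

end S5

/-- Let `J ⊊ b'` be an ideal of the Borel subalgebra `b` contained in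
the derived algebra, with root set `R_J` (so `J = ⊕_{α∈R_J} g_α`).  Then the image of
`ℂ·X_α` in `b/J` generates a 1-dimensional ideal of `b/J` contained in `b'/J` if and
only if `α ∈ R⁺ \ R_J` and for every simple root `a`, either `a + α` is not a root or
`a + α ∈ R_J`. -/
theorem one_dimensional_ideal_of_quotient_iff
    {b : Type*} [LieRing b] [LieAlgebra ℂ b] (H : LieSubalgebra ℂ b)
    {ι : Type*} [Fintype ι] (α : ι → (H →ₗ[ℂ] ℂ)) (X : ι → b)
    (S : Set ι)
    (hXne : ∀ i, X i ≠ 0)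
    (hαne : ∀ i, α i ≠ 0)
    (hαinj : Function.Injective α)
    (hroot : ∀ (h : H) (i : ι), ⁅(h : b), X i⁆ = α i h • X i)
    (hAb : ∀ x y : H, ⁅(x : b), (y : b)⁆ = 0)
    (hSep : ∀ h : H, (∀ i, α i h = 0) → h = 0)
    (hSpan : ∀ x : b, ∃ (h : H) (c : ι → ℂ), x = (h : b) + ∑ i, c i • X i)
    (hIndep : ∀ (h : H) (c : ι → ℂ),
      (h : b) + ∑ i, c i • X i = 0 → h = 0 ∧ ∀ i, c i = 0)
    (hXX : ∀ i j k : ι, α k = α i + α j → ∃ c : ℂ, c ≠ 0 ∧ ⁅X i, X j⁆ = c • X k)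
    (hXX0 : ∀ i j : ι, (¬∃ k, α k = α i + α j) → ⁅X i, X j⁆ = 0)
    (hGenRoots : ∀ j, j ∉ S → ∃ s ∈ S, ∃ j' : ι, α j = α s + α j')
    (J : LieIdeal ℂ b) (RJ : Set ι)
    (hJ : (J : Submodule ℂ b) = ⨆ i ∈ RJ, ℂ ∙ X i)
    (hJne : (J : Submodule ℂ b) ≠ Submodule.span ℂ (Set.range X))
    (i : ι) :
    (∃ K : LieIdeal ℂ (b ⧸ J),
        (K : Submodule ℂ (b ⧸ J)) = (ℂ ∙ (LieSubmodule.Quotient.mk' J (X i))) ∧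
        Module.finrank ℂ K = 1 ∧
        (K : Submodule ℂ (b ⧸ J)) ≤
          Submodule.span ℂ (Set.range fun j => LieSubmodule.Quotient.mk' J (X j))) ↔
      (i ∉ RJ ∧ ∀ s ∈ S, (¬∃ k, α k = α s + α i) ∨ ∃ k ∈ RJ, α k = α s + α i) := by
  classical
  have hJ' : LieSubmodule.toSubmodule J = ⨆ i ∈ RJ, ℂ ∙ X i := by
    rw [← LieIdeal.toLieSubalgebra_toSubmodule]; exact hJ
  have hJspan : (LieSubmodule.toSubmodule J) = Submodule.span ℂ (X '' RJ) := by
    rw [hJ', ← Submodule.span_iUnion₂]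
    congr 1
    ext x
    simp [eq_comm]
  have hXJ : ∀ j ∈ RJ, X j ∈ (LieSubmodule.toSubmodule J) := by
    intro j hj
    rw [hJspan]
    exact Submodule.subset_span ⟨j, hj, rfl⟩
  have indep0 : ∀ c : ι → ℂ, ∑ j, c j • X j = 0 → ∀ j, c j = 0 := by
    intro c hc
    exact (hIndep 0 c (by rw [ZeroMemClass.coe_zero, zero_add]; exact hc)).2
  have sum_single : ∀ (cc : ℂ) (k0 : ι), ∑ j, (if j = k0 then cc else 0) • X j = cc • X k0 := by
    intro cc k0
    simp [ite_smul]
  have memJ : ∀ x ∈ (LieSubmodule.toSubmodule J),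
      ∃ e : ι → ℂ, (∀ j, j ∉ RJ → e j = 0) ∧ x = ∑ j, e j • X j := by
    intro x hx
    rw [hJspan] at hx
    induction hx using Submodule.span_induction with
    | mem x hxs =>
      obtain ⟨j, hj, rfl⟩ := hxs
      exact ⟨fun j' => if j' = j then 1 else 0,
        fun j' hj' => if_neg fun h => hj' (by rw [h]; exact hj), by rw [sum_single, one_smul]⟩
    | zero => exact ⟨0, fun _ _ => rfl, by simp⟩
    | add x y hx hy ihx ihy =>
      obtain ⟨e, he0, he⟩ := ihx
      obtain ⟨f, hf0, hf⟩ := ihy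
      refine ⟨e + f, fun j hj => by simp [he0 j hj, hf0 j hj], ?_⟩
      simp only [Pi.add_apply, add_smul, Finset.sum_add_distrib, ← he, ← hf]
    | smul a x hx ihx =>
      obtain ⟨e, he0, he⟩ := ihx
      refine ⟨a • e, fun j hj => by simp [he0 j hj], ?_⟩
      simp only [Pi.smul_apply, smul_eq_mul, ← smul_smul, ← Finset.smul_sum, ← he]
  have coefJ : ∀ x ∈ (LieSubmodule.toSubmodule J), ∀ c : ι → ℂ,
      x = ∑ j, c j • X j → ∀ k, k ∉ RJ → c k = 0 := by
    intro x hx c hxc k hk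
    obtain ⟨e, he0, hee⟩ := memJ x hx
    have hz : ∑ j, (c j - e j) • X j = 0 := by
      simp only [sub_smul, Finset.sum_sub_distrib, ← hxc, ← hee, sub_self]
    have h1 := indep0 _ hz k
    rw [he0 k hk, sub_zero] at h1
    exact h1
  have hXiJ' : ∀ k, k ∉ RJ → X k ∉ (LieSubmodule.toSubmodule J) := by
    intro k hk hmem
    have := coefJ (X k) hmem (fun j => if j = k then 1 else 0)
      (by rw [sum_single, one_smul]) k hk
    simp at this
  have hmk : ∀ z : b, LieSubmodule.Quotient.mk' J z = LieSubmodule.Quotient.mk (N := J) z :=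
    fun _ => rfl
  constructor
  · rintro ⟨K, hK1, hK2, hK3⟩
    rw [LieIdeal.toLieSubalgebra_toSubmodule] at hK1 hK3
    have hiRJ : i ∉ RJ := by
      intro hiRJ
      have hmk0 : LieSubmodule.Quotient.mk' J (X i) = 0 := by
        rw [LieSubmodule.Quotient.mk_eq_zero _]
        exact (LieSubmodule.mem_toSubmodule _).mp (hXJ i hiRJ)
      have h1 : (LieSubmodule.toSubmodule K) = ⊥ := by
        rw [hK1, hmk0]
        exact Submodule.span_singleton_eq_bot.mpr rfl
      have h2 : Module.finrank ℂ (LieSubmodule.toSubmodule K) = 1 := hK2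
      rw [h1, finrank_bot] at h2
      exact one_ne_zero h2.symm
    refine ⟨hiRJ, ?_⟩
    intro s hs
    by_cases hex : ∃ k, α k = α s + α i
    · obtain ⟨k, hk⟩ := hex
      refine Or.inr ⟨k, ?_, hk⟩
      by_contra hkRJ
      obtain ⟨c, hc, hb⟩ := hXX s i k hk
      have hki : k ≠ i := by
        intro h
        subst h
        exact hαne s (right_eq_add.mp hk)
      have hmemK : (⁅LieSubmodule.Quotient.mk' J (X s), LieSubmodule.Quotient.mk' J (X i)⁆ :
          b ⧸ J) ∈ K := by
        apply lie_mem_right ℂ (b ⧸ J) K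
        apply (LieSubmodule.mem_toSubmodule _).mp
        rw [hK1]
        exact Submodule.mem_span_singleton_self _
      have hmemK' := (LieSubmodule.mem_toSubmodule _).mpr hmemK
      rw [hK1] at hmemK'
      obtain ⟨d, hd⟩ := Submodule.mem_span_singleton.mp hmemK'
      have hq : c • X k - d • X i ∈ (LieSubmodule.toSubmodule J) := by
        have h0 : LieSubmodule.Quotient.mk' J (c • X k - d • X i) = 0 := by
          rw [map_sub, map_smul, map_smul]
          have hbr : (⁅LieSubmodule.Quotient.mk' J (X s),
              LieSubmodule.Quotient.mk' J (X i)⁆ : b ⧸ J)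
              = LieSubmodule.Quotient.mk' J ⁅X s, X i⁆ := by
            rw [hmk, hmk, hmk, LieSubmodule.Quotient.mk_bracket]
          have hdd : d • LieSubmodule.Quotient.mk' J (X i)
              = c • LieSubmodule.Quotient.mk' J (X k) := by
            rw [hd, hbr, hb, map_smul]
          rw [← hdd, sub_self]
        exact (LieSubmodule.mem_toSubmodule _).mpr
          ((LieSubmodule.Quotient.mk_eq_zero _).mp h0)
      have hcoef := coefJ _ hq
        (fun j => (if j = k then c else 0) + (if j = i then -d else 0))
        (by
          simp only [add_smul, Finset.sum_add_distrib, sum_single]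
          rw [neg_smul, ← sub_eq_add_neg])
        k hkRJ
      exact hc (by simpa [hki] using hcoef)
    · exact Or.inl hex
  · rintro ⟨hiRJ, hcond⟩
    have hXsJ : ∀ s ∈ S, ⁅X s, X i⁆ ∈ (LieSubmodule.toSubmodule J) := by
      intro s hs
      rcases hcond s hs with hno | ⟨k, hkRJ, hk⟩
      · rw [hXX0 s i hno]; exact Submodule.zero_mem _
      · obtain ⟨c, hc, hb⟩ := hXX s i k hk
        rw [hb]
        exact Submodule.smul_mem _ _ (hXJ k hkRJ)
    set W : Submodule ℂ b := (LieSubmodule.toSubmodule J) ⊔ (ℂ ∙ X i) with hWdef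
    have hWX : ∀ s ∈ S, ∀ w ∈ W, ⁅X s, w⁆ ∈ (LieSubmodule.toSubmodule J) := by
      intro s hs w hw
      obtain ⟨u, hu, v, hv, rfl⟩ := Submodule.mem_sup.mp hw
      obtain ⟨a, rfl⟩ := Submodule.mem_span_singleton.mp hv
      rw [lie_add, lie_smul]
      refine Submodule.add_mem _ ?_ (Submodule.smul_mem _ _ (hXsJ s hs))
      exact (LieSubmodule.mem_toSubmodule _).mpr
        (LieSubmodule.lie_mem _ ((LieSubmodule.mem_toSubmodule _).mp hu))
    let f : b →ₗ[ℂ] b :=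
      { toFun := fun y => ⁅y, X i⁆
        map_add' := fun x y => add_lie x y (X i)
        map_smul' := fun a x => smul_lie a x (X i) }
    set N := W.comap f with hNdef
    have hNH : ∀ h : H, (h : b) ∈ N := by
      intro h
      refine Submodule.mem_comap.mpr ?_
      show ⁅(h : b), X i⁆ ∈ W
      rw [hroot h i]
      exact Submodule.smul_mem _ _ (le_sup_right (a := (LieSubmodule.toSubmodule J))
        (Submodule.mem_span_singleton_self _))
    have hNs : ∀ s ∈ S, X s ∈ N := by
      intro s hs
      refine Submodule.mem_comap.mpr ?_
      show ⁅X s, X i⁆ ∈ W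
      exact le_sup_left (b := (ℂ ∙ X i)) (hXsJ s hs)
    have hNX : ∀ j, X j ∈ N := by
      by_contra hbad
      push_neg at hbad
      obtain ⟨j₀, hj₀⟩ := hbad
      set B : Set ι := {j | X j ∉ N} with hB
      have hdesc : ∀ j ∈ B, ∃ s ∈ S, ∃ j', j' ∈ B ∧ α j = α s + α j' := by
        intro j hj
        have hjS : j ∉ S := fun hjs => hj (hNs j hjs)
        obtain ⟨s, hsS, j', hjj'⟩ := hGenRoots j hjS
        refine ⟨s, hsS, j', ?_, hjj'⟩
        by_contra hj'B
        have hj'N : X j' ∈ N := not_not.mp hj'B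
        apply hj
        obtain ⟨c, hc, hb⟩ := hXX s j' j hjj'
        have hXj : ⁅X j, X i⁆ = c⁻¹ • (⁅X s, ⁅X j', X i⁆⁆ - ⁅X j', ⁅X s, X i⁆⁆) := by
          have h2 : c • ⁅X j, X i⁆ = ⁅X s, ⁅X j', X i⁆⁆ - ⁅X j', ⁅X s, X i⁆⁆ := by
            rw [← smul_lie, ← hb, lie_lie]
          rw [← h2, smul_smul, inv_mul_cancel₀ hc, one_smul]
        refine Submodule.mem_comap.mpr ?_
        show ⁅X j, X i⁆ ∈ W
        rw [hXj]
        apply Submodule.smul_mem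
        apply Submodule.sub_mem
        · exact le_sup_left (b := (ℂ ∙ X i)) (hWX s hsS _ (Submodule.mem_comap.mp hj'N))
        · refine le_sup_left (b := (ℂ ∙ X i)) ?_
          exact (LieSubmodule.mem_toSubmodule _).mpr
            (LieSubmodule.lie_mem _ ((LieSubmodule.mem_toSubmodule _).mp (hXsJ s hsS)))
      choose sf hsf jf hjf hwf using hdesc
      let g : ℕ → {j // j ∈ B} := fun n =>
        Nat.rec ⟨j₀, hj₀⟩ (fun _ p => ⟨jf p.1 p.2, hjf p.1 p.2⟩) n
      have hchain : ∀ (d a : ℕ), ∃ l : List ι, l.length = d ∧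
          S5.VC α ((g a).1) l ((g (a + d)).1) := by
        intro d
        induction d with
        | zero => intro a; exact ⟨[], rfl, rfl⟩
        | succ d ih =>
          intro a
          obtain ⟨l, hlen, hvc⟩ := ih (a + 1)
          refine ⟨sf (g a).1 (g a).2 :: l, by simp [hlen], ⟨(g (a + 1)).1, ?_, ?_⟩⟩
          · exact hwf (g a).1 (g a).2
          · have he : a + (d + 1) = (a + 1) + d := by omega
            rw [he]
            exact hvc
      obtain ⟨n₁, n₂, hne12, heq⟩ := Finite.exists_ne_map_eq_of_infinite g
      obtain ⟨a, b2, hab, heqab⟩ : ∃ a b2, a < b2 ∧ g a = g b2 := by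
        rcases lt_or_gt_of_ne hne12 with h | h
        · exact ⟨n₁, n₂, h, heq⟩
        · exact ⟨n₂, n₁, h, heq.symm⟩
      obtain ⟨l, hlen, hvc⟩ := hchain (b2 - a) a
      have hd : a + (b2 - a) = b2 := by omega
      rw [hd, ← heqab] at hvc
      refine S5.no_cycle H α X hXne hαne hroot hSpan hXX hXX0 l (g a).1 ?_ hvc
      intro h0
      rw [h0] at hlen
      simp at hlen
      omega
    have hWlie : ∀ y : b, ⁅y, X i⁆ ∈ W := by
      intro y
      obtain ⟨h, c, rfl⟩ := hSpan y
      have hmem : (h : b) + ∑ j, c j • X j ∈ N :=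
        Submodule.add_mem _ (hNH h)
          (Submodule.sum_mem _ fun j _ => Submodule.smul_mem _ _ (hNX j))
      exact Submodule.mem_comap.mp hmem
    have hXiJ : X i ∉ (LieSubmodule.toSubmodule J) := hXiJ' i hiRJ
    have hmkne : LieSubmodule.Quotient.mk' J (X i) ≠ 0 := by
      rw [Ne, LieSubmodule.Quotient.mk_eq_zero]
      intro hmem
      exact hXiJ ((LieSubmodule.mem_toSubmodule _).mpr hmem)
    refine ⟨{ toSubmodule := ℂ ∙ (LieSubmodule.Quotient.mk' J (X i)), lie_mem := ?_ },
      rfl, ?_, ?_⟩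
    · intro x m hm
      obtain ⟨y, rfl⟩ := LieSubmodule.Quotient.surjective_mk' J x
      obtain ⟨d, rfl⟩ := Submodule.mem_span_singleton.mp hm
      show (⁅_, _⁆ : b ⧸ J) ∈ (ℂ ∙ (LieSubmodule.Quotient.mk' J (X i)) : Submodule ℂ (b ⧸ J))
      rw [lie_smul]
      apply Submodule.smul_mem
      have hbr : (⁅LieSubmodule.Quotient.mk' J y, LieSubmodule.Quotient.mk' J (X i)⁆ : b ⧸ J)
          = LieSubmodule.Quotient.mk' J ⁅y, X i⁆ := by
        rw [hmk, hmk, hmk, LieSubmodule.Quotient.mk_bracket]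
      rw [hbr]
      obtain ⟨u, hu, v, hv, huv⟩ := Submodule.mem_sup.mp (hWlie y)
      obtain ⟨a, rfl⟩ := Submodule.mem_span_singleton.mp hv
      rw [← huv, map_add, map_smul]
      have hu0 : LieSubmodule.Quotient.mk' J u = 0 := by
        rw [LieSubmodule.Quotient.mk_eq_zero _]
        exact (LieSubmodule.mem_toSubmodule _).mp hu
      rw [hu0, zero_add]
      exact Submodule.smul_mem _ _ (Submodule.mem_span_singleton_self _)
    · exact finrank_span_singleton hmkne
    · show Submodule.span ℂ {LieSubmodule.Quotient.mk' J (X i)} ≤ _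
      rw [Submodule.span_singleton_le_iff_mem]
      exact Submodule.subset_span ⟨i, rfl⟩
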